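/- With the randomized quantizer of the previous statement, the compression error e(x) = Q(x) - x satisfies E‖e(x)‖² ≤ min{ M/(2^r-1)², √M/(2^r-1) } · ‖x‖². -/

import Mathlib

open MeasureTheory Finset

/-- The randomized quantizer's compression error `e(x) = Q(x) - x`
satisfies `E‖e(x)‖² ≤ min{M/(2^r-1)², √M/(2^r-1)}·‖x‖²`. Same setup as Statement 4. -/
theorem randomized_quantizer_variance_bound
    {Ω : Type*} [MeasurableSpace Ω] (ℙ : Measure Ω) [IsProbabilityMeasure ℙ]
    (M r : ℕ) (hr : 1 ≤ r) (x : Fin M → ℝ) (hx : x ≠ 0)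
    (nrm θ : ℝ) (χ : Fin M → ℝ)
    (hnrm : nrm = Real.sqrt (∑ m, (x m) ^ 2))
    (hθ : θ = 1 / ((2 : ℝ) ^ r - 1))
    (hχ : ∀ m, χ m = |x m| / nrm)
    (jtx : Fin M → Ω → ℝ)
    (hmeas : ∀ m, Measurable (jtx m))
    (hvals : ∀ m ω, jtx m ω = (⌊χ m / θ⌋ : ℝ) + 1 ∨ jtx m ω = (⌊χ m / θ⌋ : ℝ))
    (hprob : ∀ m, ℙ {ω | jtx m ω = (⌊χ m / θ⌋ : ℝ) + 1}
      = ENNReal.ofReal ((χ m - (⌊χ m / θ⌋ : ℝ) * θ) / θ))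
    (hindep : ProbabilityTheory.iIndepFun jtx ℙ) :
    (∫ ω, ∑ m, (nrm * Real.sign (x m) * (jtx m ω * θ) - x m) ^ 2 ∂ℙ)
      ≤ min ((M : ℝ) / ((2 : ℝ) ^ r - 1) ^ 2) (Real.sqrt M / ((2 : ℝ) ^ r - 1))
        * nrm ^ 2 := by
  -- basic positivity facts
  have hD : (1 : ℝ) ≤ (2 : ℝ) ^ r - 1 := by
    have : (2 : ℝ) ^ 1 ≤ (2 : ℝ) ^ r := pow_le_pow_right₀ (by norm_num) hr
    simpa using by linarith [this]
  have hDpos : (0 : ℝ) < (2 : ℝ) ^ r - 1 := by linarith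
  have hθpos : 0 < θ := by rw [hθ]; positivity
  have hsum_pos : 0 < ∑ m, (x m) ^ 2 := by
    obtain ⟨m, hm⟩ := Function.ne_iff.mp hx
    have hm' : x m ≠ 0 := by simpa using hm
    exact Finset.sum_pos' (fun i _ => sq_nonneg _)
      ⟨m, Finset.mem_univ m, by positivity⟩
  have hnrm_pos : 0 < nrm := by rw [hnrm]; exact Real.sqrt_pos.mpr hsum_pos
  have hnrm_sq : nrm ^ 2 = ∑ m, (x m) ^ 2 := by
    rw [hnrm, Real.sq_sqrt hsum_pos.le]
  have hχ_nonneg : ∀ m, 0 ≤ χ m := fun m => by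
    rw [hχ m]; positivity
  have hsa : ∀ y : ℝ, Real.sign y * |y| = y := by
    intro y
    rcases lt_trichotomy y 0 with h | h | h
    · rw [Real.sign_of_neg h, abs_of_neg h]; ring
    · simp [h]
    · rw [Real.sign_of_pos h, abs_of_pos h]; ring
  have hxm : ∀ m, x m = nrm * Real.sign (x m) * χ m := fun m => by
    calc x m = Real.sign (x m) * |x m| := (hsa _).symm
      _ = nrm * Real.sign (x m) * χ m := by rw [hχ m]; field_simp
  -- per-coordinate data
  set j : Fin M → ℝ := fun m => (⌊χ m / θ⌋ : ℝ) with hj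
  set t : Fin M → ℝ := fun m => χ m - j m * θ with ht
  have ht0 : ∀ m, 0 ≤ t m := fun m => by
    have := Int.floor_le (χ m / θ)
    have h2 : j m * θ ≤ χ m := by
      rw [hj]
      calc (⌊χ m / θ⌋ : ℝ) * θ ≤ (χ m / θ) * θ := by
            exact mul_le_mul_of_nonneg_right this hθpos.le
        _ = χ m := by field_simp
    simp only [ht]; linarith
  have htθ : ∀ m, t m ≤ θ := fun m => by
    have := (Int.lt_floor_add_one (χ m / θ)).le
    have h2 : χ m ≤ (j m + 1) * θ := by
      rw [hj]
      calc χ m = (χ m / θ) * θ := by field_simp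
        _ ≤ ((⌊χ m / θ⌋ : ℝ) + 1) * θ := mul_le_mul_of_nonneg_right this hθpos.le
    simp only [ht]; nlinarith
  have htχ : ∀ m, t m ≤ χ m := fun m => by
    have hjnn : (0 : ℝ) ≤ j m := by
      simp only [hj]
      have : (0:ℤ) ≤ ⌊χ m / θ⌋ := Int.floor_nonneg.mpr (div_nonneg (hχ_nonneg m) hθpos.le)
      exact_mod_cast this
    simp only [ht]; nlinarith
  -- the event and its probability
  set S : Fin M → Set Ω := fun m => {ω | jtx m ω = j m + 1} with hS
  have hSmeas : ∀ m, MeasurableSet (S m) := fun m =>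
    (hmeas m) (measurableSet_singleton (j m + 1))
  set p : Fin M → ℝ := fun m => t m / θ with hp
  have hp0 : ∀ m, 0 ≤ p m := fun m => div_nonneg (ht0 m) hθpos.le
  have hPS : ∀ m, (ℙ (S m)).toReal = p m := fun m => by
    rw [hS]; simp only []
    rw [hprob m, ENNReal.toReal_ofReal (hp0 m)]
  -- pointwise representation of each summand
  set A : Fin M → ℝ := fun m => (nrm * Real.sign (x m) * ((j m + 1) * θ) - x m) ^ 2 with hA
  set B : Fin M → ℝ := fun m => (nrm * Real.sign (x m) * (j m * θ) - x m) ^ 2 with hB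
  have hrep : ∀ m, (fun ω => (nrm * Real.sign (x m) * (jtx m ω * θ) - x m) ^ 2)
      = fun ω => B m + (S m).indicator (fun _ => A m - B m) ω := by
    intro m
    funext ω
    by_cases hω : ω ∈ S m
    · rw [Set.indicator_of_mem hω]
      have : jtx m ω = j m + 1 := hω
      rw [this, hA, hB]; ring
    · rw [Set.indicator_of_notMem hω]
      have : jtx m ω = j m := by
        rcases hvals m ω with h | h
        · exact absurd h hω
        · exact h
      rw [this, hB]; ring
  have hint : ∀ m, Integrable
      (fun ω => (nrm * Real.sign (x m) * (jtx m ω * θ) - x m) ^ 2) ℙ := by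
    intro m
    rw [hrep m]
    exact (integrable_const _).add ((integrable_const _).indicator (hSmeas m))
  -- value of each integral
  have hval : ∀ m, (∫ ω, (nrm * Real.sign (x m) * (jtx m ω * θ) - x m) ^ 2 ∂ℙ)
      = B m + (A m - B m) * p m := by
    intro m
    rw [hrep m, integral_add (integrable_const _)
      ((integrable_const _).indicator (hSmeas m)),
      integral_const, integral_indicator_const _ (hSmeas m), show ℙ.real (S m) = p m from hPS m]
    simp [mul_comm]
  -- bounds on each integral value
  have hVle : ∀ m, B m + (A m - B m) * p m ≤ nrm ^ 2 * (t m * (θ - t m)) := by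
    intro m
    by_cases hxm0 : x m = 0
    · have hs0 : Real.sign (x m) = 0 := by rw [hxm0, Real.sign_zero]
      have hA0 : A m = 0 := by rw [hA]; simp [hs0, hxm0]
      have hB0 : B m = 0 := by rw [hB]; simp [hs0, hxm0]
      rw [hA0, hB0]
      have h4 : 0 ≤ t m * (θ - t m) := mul_nonneg (ht0 m) (sub_nonneg.mpr (htθ m))
      have h5 : 0 ≤ nrm ^ 2 * (t m * (θ - t m)) := mul_nonneg (sq_nonneg _) h4
      linarith
    · have hs2 : (Real.sign (x m)) ^ 2 = 1 := by
        rcases lt_trichotomy (x m) 0 with h | h | h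
        · rw [Real.sign_of_neg h]; norm_num
        · exact absurd h hxm0
        · rw [Real.sign_of_pos h]; norm_num
      have hAe : A m = nrm ^ 2 * (θ - t m) ^ 2 := by
        simp only [hA, ht]
        linear_combination
          (x m + nrm * Real.sign (x m) * χ m
            - 2 * (nrm * Real.sign (x m) * ((j m + 1) * θ))) * (hxm m)
          + (nrm ^ 2 * ((j m + 1) * θ - χ m) ^ 2) * hs2
      have hBe : B m = nrm ^ 2 * (t m) ^ 2 := by
        simp only [hB, ht]
        linear_combination
          (x m + nrm * Real.sign (x m) * χ m
            - 2 * (nrm * Real.sign (x m) * (j m * θ))) * (hxm m)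
          + (nrm ^ 2 * (j m * θ - χ m) ^ 2) * hs2
      have : B m + (A m - B m) * p m = nrm ^ 2 * (t m * (θ - t m)) := by
        rw [hAe, hBe, hp]
        field_simp
        ring
      rw [this]
  -- the two global bounds
  have hb1 : ∀ m, B m + (A m - B m) * p m ≤ nrm ^ 2 * θ ^ 2 := by
    intro m
    refine (hVle m).trans ?_
    have h1 := ht0 m; have h2 := htθ m
    have key : t m * (θ - t m) ≤ θ ^ 2 := by nlinarith [sq_nonneg (θ - t m)]
    exact mul_le_mul_of_nonneg_left key (sq_nonneg _)
  have hb2 : ∀ m, B m + (A m - B m) * p m ≤ nrm ^ 2 * (θ * χ m) := by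
    intro m
    refine (hVle m).trans ?_
    have h1 := ht0 m; have h2 := htθ m; have h3 := htχ m
    have key : t m * (θ - t m) ≤ θ * χ m := by
      nlinarith [mul_nonneg hθpos.le (sub_nonneg.mpr h3), sq_nonneg (t m)]
    exact mul_le_mul_of_nonneg_left key (sq_nonneg _)
  -- sum over m
  rw [integral_finset_sum _ (fun m _ => hint m)]
  have hsum1 : ∑ m, (∫ ω, (nrm * Real.sign (x m) * (jtx m ω * θ) - x m) ^ 2 ∂ℙ)
      ≤ (M : ℝ) / ((2 : ℝ) ^ r - 1) ^ 2 * nrm ^ 2 := by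
    calc ∑ m, (∫ ω, (nrm * Real.sign (x m) * (jtx m ω * θ) - x m) ^ 2 ∂ℙ)
        ≤ ∑ m : Fin M, nrm ^ 2 * θ ^ 2 := by
          apply Finset.sum_le_sum
          intro m _
          rw [hval m]; exact hb1 m
      _ = (M : ℝ) * (nrm ^ 2 * θ ^ 2) := by
          rw [Finset.sum_const, Finset.card_univ, Fintype.card_fin, nsmul_eq_mul]
      _ = (M : ℝ) / ((2 : ℝ) ^ r - 1) ^ 2 * nrm ^ 2 := by
          rw [hθ]; field_simp
  have hsumχ : ∑ m, χ m ≤ Real.sqrt M := by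
    have h1 : (∑ m, χ m) ^ 2 ≤ (M : ℝ) * ∑ m, (χ m) ^ 2 := by
      have := sq_sum_le_card_mul_sum_sq (s := Finset.univ) (f := χ)
      simpa [Finset.card_univ] using this
    have h2 : ∑ m, (χ m) ^ 2 = 1 := by
      have : ∀ m, (χ m) ^ 2 = (x m) ^ 2 / nrm ^ 2 := fun m => by
        rw [hχ m, div_pow, sq_abs]
      rw [Finset.sum_congr rfl fun m _ => this m, ← Finset.sum_div, ← hnrm_sq,
        div_self (by positivity)]
    rw [h2, mul_one] at h1
    have h3 : 0 ≤ ∑ m, χ m := Finset.sum_nonneg fun m _ => hχ_nonneg m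
    exact (Real.le_sqrt h3 (Nat.cast_nonneg M)).mpr h1
  have hsum2 : ∑ m, (∫ ω, (nrm * Real.sign (x m) * (jtx m ω * θ) - x m) ^ 2 ∂ℙ)
      ≤ Real.sqrt M / ((2 : ℝ) ^ r - 1) * nrm ^ 2 := by
    calc ∑ m, (∫ ω, (nrm * Real.sign (x m) * (jtx m ω * θ) - x m) ^ 2 ∂ℙ)
        ≤ ∑ m, nrm ^ 2 * (θ * χ m) := by
          apply Finset.sum_le_sum
          intro m _
          rw [hval m]; exact hb2 m
      _ = nrm ^ 2 * θ * ∑ m, χ m := by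
          rw [Finset.mul_sum]; apply Finset.sum_congr rfl; intro m _; ring
      _ ≤ nrm ^ 2 * θ * Real.sqrt M := by
          apply mul_le_mul_of_nonneg_left hsumχ (by positivity)
      _ = Real.sqrt M / ((2 : ℝ) ^ r - 1) * nrm ^ 2 := by
          rw [hθ]; field_simp
  rw [min_mul_of_nonneg _ _ (by positivity : (0:ℝ) ≤ nrm ^ 2)]
  exact le_min hsum1 hsum2
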